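/- For β > 0 and λ ∈ ℝ, the Riemann–Liouville fractional derivative of order ⌈β⌉ − β applied to the function t ↦ t^(⌈β⌉−1) E_{β,⌈β⌉}(λ t^β) equals t^(β−1) E_{β,β}(λ t^β) for all t > 0, where E_{β,μ}(z) = Σ_{ℓ=0}^∞ z^ℓ / Γ(βℓ + μ) is the Mittag-Leffler function. -/

import Mathlib

open Real MeasureTheory intervalIntegral

/-- Mittag-Leffler function `E_{β,μ}(z) = Σ_ℓ z^ℓ / Γ(βℓ+μ)`. -/
noncomputable def mittagLeffler (β μ z : ℝ) : ℝ :=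
  ∑' ℓ : ℕ, z ^ ℓ / Real.Gamma (β * ℓ + μ)

/-- Riemann–Liouville fractional integral `J^γ` of order `γ ∈ [0,1]` (with `J^0 = id`). -/
noncomputable def RLint (γ : ℝ) (f : ℝ → ℝ) (t : ℝ) : ℝ :=
  if γ = 0 then f t
  else (1 / Real.Gamma γ) * ∫ s in (0:ℝ)..t, f s / (t - s) ^ (1 - γ)

/-- Riemann–Liouville fractional derivative `D^δ = d/dt ∘ J^{1-δ}` of order `δ ∈ [0,1)`
(with `D^0 = id`). -/
noncomputable def RLderiv (δ : ℝ) (f : ℝ → ℝ) (t : ℝ) : ℝ :=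
  if δ = 0 then f t else deriv (RLint (1 - δ) f) t


open Filter Set



lemma rpow_arith {x : ℝ} (hx : 0 < x) (β c : ℝ) (ℓ : ℕ) :
    x ^ (β * ℓ + c) = (x ^ β) ^ ℓ * x ^ c := by
  rw [Real.rpow_add hx, ← Real.rpow_natCast (x ^ β) ℓ, ← Real.rpow_mul hx.le]

lemma Gamma_ratio {β : ℝ} (hβ : 0 < β) {y : ℝ} (hy : 2 ≤ y) :
    Real.Gamma y * (y - 1) ^ β ≤ Real.Gamma (y + β) := by
  have h1 : (0:ℝ) < y - 1 := by linarith
  have hy0 : (0:ℝ) < y := by linarith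
  have hyβ : (0:ℝ) < y + β := by linarith
  have hG1 : 0 < Real.Gamma (y - 1) := Real.Gamma_pos_of_pos h1
  have hGy : 0 < Real.Gamma y := Real.Gamma_pos_of_pos hy0
  have hGyβ : 0 < Real.Gamma (y + β) := Real.Gamma_pos_of_pos hyβ
  have key := Real.convexOn_log_Gamma.slope_mono_adjacent (x := y - 1) (y := y) (z := y + β)
    (Set.mem_Ioi.2 h1) (Set.mem_Ioi.2 hyβ) (by linarith) (by linarith)
  simp only [Function.comp] at key
  rw [show y - (y - 1) = 1 by ring, show y + β - y = β by ring, div_one] at key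
  have hrec : Real.Gamma y = (y - 1) * Real.Gamma (y - 1) := by
    have := Real.Gamma_add_one h1.ne'
    rwa [sub_add_cancel] at this
  have hlog : Real.log (Real.Gamma y) - Real.log (Real.Gamma (y - 1)) = Real.log (y - 1) := by
    rw [hrec, Real.log_mul h1.ne' hG1.ne']; ring
  rw [hlog] at key
  have key2 : β * Real.log (y - 1) ≤
      Real.log (Real.Gamma (y + β)) - Real.log (Real.Gamma y) := by
    have := (le_div_iff₀ hβ).mp key
    linarith
  rw [← Real.log_le_log_iff (by positivity) hGyβ,
    Real.log_mul hGy.ne' (Real.rpow_pos_of_pos h1 β).ne', Real.log_rpow h1]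
  linarith

lemma summable_ML {β μ : ℝ} (hβ : 0 < β) (hμ : 0 < μ) (x : ℝ) :
    Summable (fun ℓ : ℕ => x ^ ℓ / Real.Gamma (β * ℓ + μ)) := by
  apply summable_of_ratio_norm_eventually_le (r := 1/2) (by norm_num)
  have h1 : Tendsto (fun ℓ : ℕ => β * ℓ + μ) atTop atTop :=
    tendsto_atTop_add_const_right _ μ (tendsto_natCast_atTop_atTop.const_mul_atTop hβ)
  have h1' : Tendsto (fun ℓ : ℕ => β * ℓ + μ - 1) atTop atTop :=
    tendsto_atTop_add_const_right _ (-1) h1 |>.congr (fun ℓ => by ring)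
  have h2 : Tendsto (fun ℓ : ℕ => (β * ℓ + μ - 1) ^ β) atTop atTop :=
    (tendsto_rpow_atTop hβ).comp h1'
  filter_upwards [h1.eventually_ge_atTop 2, h2.eventually_ge_atTop (2 * (|x| + 1))]
    with ℓ hy2 hr
  have hypos : (0:ℝ) < β * ℓ + μ := by linarith
  have hGy : 0 < Real.Gamma (β * ℓ + μ) := Real.Gamma_pos_of_pos hypos
  have hGyβ : 0 < Real.Gamma (β * ℓ + μ + β) := Real.Gamma_pos_of_pos (by linarith)
  have hexp : β * (ℓ + 1 : ℕ) + μ = β * ℓ + μ + β := by push_cast; ring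
  have hΓ : Real.Gamma (β * ℓ + μ) * (2 * (|x| + 1)) ≤ Real.Gamma (β * ℓ + μ + β) := by
    calc Real.Gamma (β * ℓ + μ) * (2 * (|x| + 1))
        ≤ Real.Gamma (β * ℓ + μ) * (β * ℓ + μ - 1) ^ β := by
          exact mul_le_mul_of_nonneg_left hr hGy.le
      _ ≤ Real.Gamma (β * ℓ + μ + β) := Gamma_ratio hβ hy2
  rw [norm_div, norm_pow, Real.norm_eq_abs, Real.norm_eq_abs, norm_div, norm_pow,
    Real.norm_eq_abs, Real.norm_eq_abs, hexp, abs_of_pos hGyβ, abs_of_pos hGy]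
  calc |x| ^ (ℓ + 1) / Real.Gamma (β * ℓ + μ + β)
      ≤ |x| ^ (ℓ + 1) / (Real.Gamma (β * ℓ + μ) * (2 * (|x| + 1))) := by
        gcongr
    _ = |x| / (2 * (|x| + 1)) * (|x| ^ ℓ / Real.Gamma (β * ℓ + μ)) := by
        rw [pow_succ]; field_simp
    _ ≤ 1 / 2 * (|x| ^ ℓ / Real.Gamma (β * ℓ + μ)) := by
        apply mul_le_mul_of_nonneg_right _ (by positivity)
        rw [div_le_div_iff₀ (by positivity) (by norm_num)]
        linarith [abs_nonneg x]



lemma integral_beta_one {a b : ℝ} (ha : 0 < a) (hb : 0 < b) :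
    ∫ u in (0:ℝ)..1, u ^ (a - 1) * (1 - u) ^ (b - 1)
      = Real.Gamma a * Real.Gamma b / Real.Gamma (a + b) := by
  have hcb : Complex.betaIntegral a b
      = ((∫ u in (0:ℝ)..1, u ^ (a - 1) * (1 - u) ^ (b - 1) : ℝ) : ℂ) := by
    rw [Complex.betaIntegral, ← intervalIntegral.integral_ofReal]
    refine intervalIntegral.integral_congr fun s hs => ?_
    rw [Set.uIcc_of_le zero_le_one] at hs
    rw [Complex.ofReal_mul, Complex.ofReal_cpow hs.1, Complex.ofReal_cpow (by linarith [hs.2]),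
      Complex.ofReal_sub, Complex.ofReal_one, Complex.ofReal_sub, Complex.ofReal_one,
      Complex.ofReal_sub, Complex.ofReal_one]
  have h := Complex.Gamma_mul_Gamma_eq_betaIntegral
      (s := (a : ℂ)) (t := (b : ℂ)) (by simpa using ha) (by simpa using hb)
  rw [hcb, ← Complex.ofReal_add, Complex.Gamma_ofReal, Complex.Gamma_ofReal,
    Complex.Gamma_ofReal, ← Complex.ofReal_mul, ← Complex.ofReal_mul] at h
  have h' := Complex.ofReal_injective h
  have hG : Real.Gamma (a + b) ≠ 0 := (Real.Gamma_pos_of_pos (by linarith)).ne'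
  rw [eq_div_iff hG]
  rw [h']; ring

lemma intervalIntegrable_betaKernel {a b x : ℝ} (ha : 0 < a) (hb : 0 < b) (hx : 0 < x) :
    IntervalIntegrable (fun s => s ^ (a - 1) * (x - s) ^ (b - 1)) volume 0 x := by
  have h2 : (0:ℝ) < x / 2 := by linarith
  apply IntervalIntegrable.trans (b := x / 2)
  · refine (intervalIntegrable_rpow' (by linarith)).mul_continuousOn ?_
    refine ContinuousOn.rpow_const (continuous_const.sub continuous_id).continuousOn ?_
    intro s hs
    rw [Set.uIcc_of_le h2.le] at hs
    have hlt : s < x := lt_of_le_of_lt hs.2 (by linarith)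
    exact Or.inl (sub_ne_zero.2 hlt.ne')
  · have base : IntervalIntegrable (fun s => (x - s) ^ (b - 1)) volume (x / 2) x := by
      have h0 := (intervalIntegrable_rpow' (a := 0) (b := x / 2) (r := b - 1)
        (by linarith)).comp_sub_left x
      simpa [sub_zero, show x - x / 2 = x / 2 by ring] using h0.symm
    have hc : ContinuousOn (fun s : ℝ => s ^ (a - 1)) (Set.uIcc (x / 2) x) := by
      refine ContinuousOn.rpow_const continuous_id.continuousOn ?_
      intro s hs
      rw [Set.uIcc_of_le (by linarith : x / 2 ≤ x)] at hs
      exact Or.inl (ne_of_gt (lt_of_lt_of_le h2 hs.1))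
    have h3 := base.mul_continuousOn hc
    have : (fun s : ℝ => s ^ (a - 1) * (x - s) ^ (b - 1))
        = fun s => (x - s) ^ (b - 1) * s ^ (a - 1) := funext fun s => mul_comm _ _
    rw [this]
    exact h3

lemma integral_betaKernel {a b x : ℝ} (ha : 0 < a) (hb : 0 < b) (hx : 0 < x) :
    ∫ s in (0:ℝ)..x, s ^ (a - 1) * (x - s) ^ (b - 1)
      = Real.Gamma a * Real.Gamma b / Real.Gamma (a + b) * x ^ (a + b - 1) := by
  have h := intervalIntegral.integral_comp_mul_right (a := (0:ℝ)) (b := 1)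
      (f := fun s => s ^ (a - 1) * (x - s) ^ (b - 1)) hx.ne'
  simp only [zero_mul, one_mul, smul_eq_mul] at h
  have h2 : (∫ u in (0:ℝ)..1, (u * x) ^ (a - 1) * (x - u * x) ^ (b - 1))
      = x ^ (a + b - 2) * ∫ u in (0:ℝ)..1, u ^ (a - 1) * (1 - u) ^ (b - 1) := by
    rw [← intervalIntegral.integral_const_mul]
    refine intervalIntegral.integral_congr fun u hu => ?_
    rw [Set.uIcc_of_le zero_le_one] at hu
    rw [show x - u * x = x * (1 - u) by ring,
      Real.mul_rpow hu.1 hx.le, Real.mul_rpow hx.le (by linarith [hu.2]),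
      show x ^ (a + b - 2) = x ^ (a - 1) * x ^ (b - 1) by
        rw [← Real.rpow_add hx]; ring_nf]
    ring
  rw [h2, integral_beta_one ha hb] at h
  have hxx : x * x ^ (a + b - 2) = x ^ (a + b - 1) := by
    nth_rewrite 1 [← Real.rpow_one x]
    rw [← Real.rpow_add hx]; ring_nf
  have := congrArg (fun z => x * z) h
  rw [← mul_assoc, ← mul_assoc, hxx, mul_inv_cancel₀ hx.ne', one_mul] at this
  rw [← this]; ring

/-- local kernel -/
noncomputable def MLker (β lam ν γ x : ℝ) (ℓ : ℕ) (s : ℝ) : ℝ :=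
  (lam ^ ℓ / Real.Gamma (β * ℓ + ν)) * (s ^ (β * ℓ + ν - 1) * (x - s) ^ (γ - 1))

lemma RLint_ML {β lam ν γ : ℝ} (hβ : 0 < β) (hν : 1 ≤ ν) (hγ : 0 < γ)
    (hνγ : ν + γ = β + 1) {x : ℝ} (hx : 0 < x) :
    (1 / Real.Gamma γ) *
        (∫ s in (0:ℝ)..x, (s ^ (ν - 1) * mittagLeffler β ν (lam * s ^ β)) / (x - s) ^ (1 - γ))
      = ∑' ℓ : ℕ, lam ^ ℓ * x ^ (β * ℓ + β) / Real.Gamma (β * ℓ + β + 1) := by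
  have hA : ∀ ℓ : ℕ, (0:ℝ) < β * ℓ + ν := fun ℓ => by
    have := mul_nonneg hβ.le (Nat.cast_nonneg (α := ℝ) ℓ); linarith
  have hGA : ∀ ℓ : ℕ, 0 < Real.Gamma (β * ℓ + ν) := fun ℓ => Real.Gamma_pos_of_pos (hA ℓ)
  have hGγ : 0 < Real.Gamma γ := Real.Gamma_pos_of_pos hγ
  have hint_eq : (∫ s in (0:ℝ)..x, (s ^ (ν - 1) * mittagLeffler β ν (lam * s ^ β)) / (x - s) ^ (1 - γ))
      = ∫ s in Ioo (0:ℝ) x, ∑' ℓ : ℕ, MLker β lam ν γ x ℓ s := by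
    rw [intervalIntegral.integral_of_le hx.le, MeasureTheory.integral_Ioc_eq_integral_Ioo]
    refine setIntegral_congr_fun measurableSet_Ioo fun s hs => ?_
    have hs0 : 0 < s := hs.1
    have hsx : 0 < x - s := sub_pos.2 hs.2
    rw [mittagLeffler, ← tsum_mul_left, ← tsum_div_const]
    refine tsum_congr fun ℓ => ?_
    rw [MLker, mul_pow, ← Real.rpow_natCast (s ^ β) ℓ, ← Real.rpow_mul hs0.le]
    have e1 : s ^ (β * ℓ + ν - 1) = s ^ (β * (ℓ:ℝ)) * s ^ (ν - 1) := by
      rw [← Real.rpow_add hs0]; ring_nf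
    have e2 : (x - s) ^ (γ - 1) = ((x - s) ^ (1 - γ))⁻¹ := by
      rw [← Real.rpow_neg hsx.le, neg_sub]
    rw [e1, e2]
    simp only [div_eq_mul_inv]
    ring
  have hmeas : ∀ ℓ : ℕ, AEStronglyMeasurable (MLker β lam ν γ x ℓ)
      (volume.restrict (Ioo 0 x)) := by
    intro ℓ
    have hcont : ContinuousOn (MLker β lam ν γ x ℓ) (Ioo 0 x) := by
      refine continuousOn_const.mul (ContinuousOn.mul ?_ ?_)
      · exact continuousOn_id.rpow_const fun s hs => Or.inl hs.1.ne'
      · exact ((continuous_const.sub continuous_id).continuousOn).rpow_const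
          fun s hs => Or.inl (sub_pos.2 hs.2).ne'
    exact hcont.aestronglyMeasurable measurableSet_Ioo
  have hker : ∀ ℓ : ℕ, IntegrableOn (fun s => s ^ (β * ℓ + ν - 1) * (x - s) ^ (γ - 1))
      (Ioo 0 x) volume := by
    intro ℓ
    have h := intervalIntegrable_betaKernel (hA ℓ) hγ hx
    rw [intervalIntegrable_iff_integrableOn_Ioc_of_le hx.le] at h
    exact h.mono_set Ioo_subset_Ioc_self
  have hFint : ∀ ℓ : ℕ, IntegrableOn (MLker β lam ν γ x ℓ) (Ioo 0 x) volume :=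
    fun ℓ => (hker ℓ).const_mul _
  have hval : ∀ ℓ : ℕ, (∫ s in Ioo (0:ℝ) x, s ^ (β * ℓ + ν - 1) * (x - s) ^ (γ - 1))
      = Real.Gamma (β * ℓ + ν) * Real.Gamma γ / Real.Gamma (β * ℓ + β + 1)
        * x ^ (β * ℓ + β) := by
    intro ℓ
    rw [← MeasureTheory.integral_Ioc_eq_integral_Ioo, ← intervalIntegral.integral_of_le hx.le,
      integral_betaKernel (hA ℓ) hγ hx,
      show β * (ℓ:ℝ) + ν + γ = β * ℓ + β + 1 from by rw [add_assoc, hνγ]; ring,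
      show β * (ℓ:ℝ) + β + 1 - 1 = β * ℓ + β from by ring]
  have hc_nonneg : ∀ ℓ : ℕ,
      0 ≤ Real.Gamma γ * x ^ β * ((|lam| * x ^ β) ^ ℓ / Real.Gamma (β * ℓ + (β + 1))) := by
    intro ℓ
    have := hA ℓ
    positivity
  have hcsum : Summable (fun ℓ : ℕ =>
      Real.Gamma γ * x ^ β * ((|lam| * x ^ β) ^ ℓ / Real.Gamma (β * ℓ + (β + 1)))) :=
    (summable_ML hβ (by linarith) _).mul_left _
  have hnorm : ∀ ℓ : ℕ, (∫⁻ s in Ioo (0:ℝ) x, ‖MLker β lam ν γ x ℓ s‖₊)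
      = ENNReal.ofReal
          (Real.Gamma γ * x ^ β * ((|lam| * x ^ β) ^ ℓ / Real.Gamma (β * ℓ + (β + 1)))) := by
    intro ℓ
    simp only [← enorm_eq_nnnorm]
    rw [← MeasureTheory.ofReal_integral_norm_eq_lintegral_enorm (hFint ℓ)]
    congr 1
    have heq : ∫ s in Ioo (0:ℝ) x, ‖MLker β lam ν γ x ℓ s‖
        = ∫ s in Ioo (0:ℝ) x,
            (|lam| ^ ℓ / Real.Gamma (β * ℓ + ν)) * (s ^ (β * ℓ + ν - 1) * (x - s) ^ (γ - 1)) := by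
      refine setIntegral_congr_fun measurableSet_Ioo fun s hs => ?_
      have hs0 : 0 < s := hs.1
      have hsx : 0 < x - s := sub_pos.2 hs.2
      simp only [MLker]
      rw [Real.norm_eq_abs, abs_mul, abs_div, abs_pow, abs_of_pos (hGA ℓ), abs_mul,
        abs_of_nonneg (Real.rpow_nonneg hs0.le _), abs_of_nonneg (Real.rpow_nonneg hsx.le _)]
    rw [heq, MeasureTheory.integral_const_mul, hval ℓ, rpow_arith hx β β ℓ, mul_pow,
      show β * (ℓ:ℝ) + (β + 1) = β * ℓ + β + 1 from by ring]
    have hGB : 0 < Real.Gamma (β * ℓ + β + 1) := by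
      have := hA ℓ; positivity
    field_simp
  have hne : (∑' ℓ : ℕ, ∫⁻ s in Ioo (0:ℝ) x, ‖MLker β lam ν γ x ℓ s‖₊) ≠ ⊤ := by
    rw [tsum_congr hnorm, ← ENNReal.ofReal_tsum_of_nonneg hc_nonneg hcsum]
    exact ENNReal.ofReal_ne_top
  have hterm : ∀ ℓ : ℕ, (∫ s in Ioo (0:ℝ) x, MLker β lam ν γ x ℓ s)
      = Real.Gamma γ * (lam ^ ℓ * x ^ (β * ℓ + β) / Real.Gamma (β * ℓ + β + 1)) := by
    intro ℓ
    rw [show MLker β lam ν γ x ℓ = fun s =>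
        (lam ^ ℓ / Real.Gamma (β * ℓ + ν)) * (s ^ (β * ℓ + ν - 1) * (x - s) ^ (γ - 1)) from rfl,
      MeasureTheory.integral_const_mul, hval ℓ]
    have hGB : 0 < Real.Gamma (β * ℓ + β + 1) := by
      have := hA ℓ; positivity
    field_simp
  rw [hint_eq, MeasureTheory.integral_tsum hmeas hne, tsum_congr hterm, tsum_mul_left,
    ← mul_assoc, one_div, inv_mul_cancel₀ hGγ.ne', one_mul]

lemma hasDerivAt_MLsum {β lam : ℝ} (hβ : 0 < β) {t : ℝ} (ht : 0 < t) :
    HasDerivAt (fun x => ∑' ℓ : ℕ, lam ^ ℓ * x ^ (β * ℓ + β) / Real.Gamma (β * ℓ + β + 1))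
      (t ^ (β - 1) * mittagLeffler β β (lam * t ^ β)) t := by
  have hp : ∀ ℓ : ℕ, (0:ℝ) < β * ℓ + β := fun ℓ => by
    have := mul_nonneg hβ.le (Nat.cast_nonneg (α := ℝ) ℓ); linarith
  set C := max ((t / 2) ^ (β - 1)) ((2 * t) ^ (β - 1)) with hC
  have key := hasDerivAt_tsum_of_isPreconnected
    (u := fun ℓ : ℕ => C * ((|lam| * (2 * t) ^ β) ^ ℓ / Real.Gamma (β * ℓ + β)))
    (g := fun (ℓ : ℕ) (x : ℝ) => lam ^ ℓ * x ^ (β * ℓ + β) / Real.Gamma (β * ℓ + β + 1))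
    (g' := fun (ℓ : ℕ) (x : ℝ) => lam ^ ℓ * x ^ (β * ℓ + β - 1) / Real.Gamma (β * ℓ + β))
    (t := Ioo (t / 2) (2 * t)) (y₀ := t) (y := t)
    ((summable_ML hβ hβ _).mul_left C) isOpen_Ioo isPreconnected_Ioo
    ?_ ?_ ⟨by linarith, by linarith⟩ ?_ ⟨by linarith, by linarith⟩
  · convert key using 1
    · rfl
    · rfl
    rw [mittagLeffler, ← tsum_mul_left]
    refine tsum_congr fun ℓ => ?_
    rw [mul_pow, show β * (ℓ:ℝ) + β - 1 = β * ℓ + (β - 1) from by ring, rpow_arith ht β (β - 1) ℓ]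
    ring
  · -- derivatives
    intro ℓ y hy
    have hy0 : 0 < y := lt_trans (by linarith) hy.1
    have h := ((Real.hasDerivAt_rpow_const (x := y) (p := β * ℓ + β)
      (Or.inl hy0.ne')).const_mul (lam ^ ℓ)).div_const (Real.Gamma (β * ℓ + β + 1))
    convert h using 1
    · rfl
    rw [Real.Gamma_add_one (hp ℓ).ne']
    have hG : 0 < Real.Gamma (β * ℓ + β) := Real.Gamma_pos_of_pos (hp ℓ)
    field_simp
  · -- bounds
    intro ℓ y hy
    have hy0 : 0 < y := lt_trans (by linarith) hy.1
    have hG : 0 < Real.Gamma (β * ℓ + β) := Real.Gamma_pos_of_pos (hp ℓ)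
    rw [norm_div, norm_mul, norm_pow, Real.norm_eq_abs, Real.norm_eq_abs, Real.norm_eq_abs,
      abs_of_pos hG, abs_of_nonneg (Real.rpow_nonneg hy0.le _),
      show β * (ℓ:ℝ) + β - 1 = β * ℓ + (β - 1) from by ring, rpow_arith hy0 β (β - 1) ℓ]
    have h1 : (|lam| * y ^ β) ^ ℓ ≤ (|lam| * (2 * t) ^ β) ^ ℓ :=
      pow_le_pow_left₀ (by positivity)
        (mul_le_mul_of_nonneg_left (Real.rpow_le_rpow hy0.le hy.2.le hβ.le) (abs_nonneg lam)) ℓ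
    have h2 : y ^ (β - 1) ≤ C := by
      rcases le_total 1 β with hb | hb
      · exact le_max_of_le_right (Real.rpow_le_rpow hy0.le hy.2.le (by linarith))
      · exact le_max_of_le_left
          (Real.rpow_le_rpow_of_nonpos (half_pos ht) hy.1.le (by linarith))
    have hmain : |lam| ^ ℓ * ((y ^ β) ^ ℓ * y ^ (β - 1)) ≤ C * (|lam| * (2 * t) ^ β) ^ ℓ := by
      calc |lam| ^ ℓ * ((y ^ β) ^ ℓ * y ^ (β - 1)) = (|lam| * y ^ β) ^ ℓ * y ^ (β - 1) := by
            rw [mul_pow]; ring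
        _ ≤ (|lam| * (2 * t) ^ β) ^ ℓ * C :=
            mul_le_mul h1 h2 (Real.rpow_nonneg hy0.le _) (by positivity)
        _ = C * (|lam| * (2 * t) ^ β) ^ ℓ := mul_comm _ _
    rw [← mul_div_assoc]
    exact (div_le_div_iff_of_pos_right hG).2 hmain
  · -- summable at t
    refine ((summable_ML (μ := β + 1) hβ (by linarith) (lam * t ^ β)).mul_left (t ^ β)).congr fun ℓ => ?_
    rw [mul_pow, show β * (ℓ:ℝ) + (β + 1) = β * ℓ + β + 1 from by ring,
      rpow_arith ht β β ℓ]
    ring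

/-- Lemma 2.1: for `β > 0` and `λ ∈ ℝ`,
`D_t^{⌈β⌉-β} (t^{⌈β⌉-1} E_{β,⌈β⌉}(λ t^β)) = t^{β-1} E_{β,β}(λ t^β)` for `t > 0`. -/
theorem RLderiv_mittagLeffler (β lam : ℝ) (hβ : 0 < β) :
    ∀ t : ℝ, 0 < t →
      RLderiv ((⌈β⌉ : ℝ) - β)
          (fun τ => τ ^ ((⌈β⌉ : ℝ) - 1) * mittagLeffler β (⌈β⌉ : ℝ) (lam * τ ^ β)) t
        = t ^ (β - 1) * mittagLeffler β β (lam * t ^ β) := by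
  intro t ht
  set ν : ℝ := (⌈β⌉ : ℝ) with hνdef
  have hβν : β ≤ ν := Int.le_ceil β
  have hν1 : (1:ℝ) ≤ ν := by
    have h1 : (1:ℤ) ≤ ⌈β⌉ := by
      have := Int.ceil_pos.mpr hβ; omega
    rw [hνdef]; exact_mod_cast h1
  have hνlt : ν < β + 1 := Int.ceil_lt_add_one β
  by_cases hcase : ν - β = 0
  · simp only [RLderiv, if_pos hcase]
    have hνβ : ν = β := by
      have := sub_eq_zero.mp hcase; linarith
    rw [hνβ]
  · simp only [RLderiv, if_neg hcase]
    have hγ : 0 < 1 - (ν - β) := by linarith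
    have hνγ : ν + (1 - (ν - β)) = β + 1 := by ring
    have hev : (RLint (1 - (ν - β)) (fun τ => τ ^ (ν - 1) * mittagLeffler β ν (lam * τ ^ β)))
        =ᶠ[nhds t]
        (fun x => ∑' ℓ : ℕ, lam ^ ℓ * x ^ (β * ℓ + β) / Real.Gamma (β * ℓ + β + 1)) := by
      filter_upwards [eventually_gt_nhds ht] with x hx
      rw [RLint, if_neg hγ.ne']
      exact RLint_ML hβ hν1 hγ hνγ hx
    rw [hev.deriv_eq, (hasDerivAt_MLsum hβ ht).deriv]
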